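/- For every real number α with 0 < α < 1/2, one has (1/(2π)) ∫₀^{2π} (2 sin(φ/2))^{−2α} dφ = Γ(1 − 2α) / Γ(1 − α)². -/

import Mathlib

open MeasureTheory Set Real

/-- Pointwise equality between real and complex Beta integrands. -/
lemma betaKey (u v : ℝ) {x : ℝ} (hx0 : 0 ≤ x) (hx1 : x ≤ 1) :
    (x : ℂ) ^ ((u : ℂ) - 1) * (1 - (x : ℂ)) ^ ((v : ℂ) - 1) =
      ((x ^ (u - 1) * (1 - x) ^ (v - 1) : ℝ) : ℂ) := by
  rw [Complex.ofReal_mul, Complex.ofReal_cpow hx0, Complex.ofReal_cpow (by linarith),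
    Complex.ofReal_sub, Complex.ofReal_sub, Complex.ofReal_one]
  norm_cast

/-- The real Beta integrand is integrable on `(0,1)`. -/
lemma betaIntegrable {u v : ℝ} (hu : 0 < u) (hv : 0 < v) :
    IntegrableOn (fun t : ℝ => t ^ (u - 1) * (1 - t) ^ (v - 1)) (Ioo 0 1) := by
  have h := Complex.betaIntegral_convergent (u := u) (v := v) (by simpa) (by simpa)
  rw [intervalIntegrable_iff_integrableOn_Ioc_of_le zero_le_one] at h
  have h2 : IntegrableOn
      (fun x : ℝ => ((x : ℂ) ^ ((u:ℂ) - 1) * (1 - (x:ℂ)) ^ ((v:ℂ) - 1)).re) (Ioo 0 1) :=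
    (h.mono_set Ioo_subset_Ioc_self).re
  refine IntegrableOn.congr_fun h2 ?_ measurableSet_Ioo
  intro x hx
  simp only
  rw [betaKey u v hx.1.le hx.2.le, Complex.ofReal_re]

/-- The real Beta integral evaluates via Gamma. -/
lemma betaEval {u v : ℝ} (hu : 0 < u) (hv : 0 < v) :
    ∫ t in (0:ℝ)..1, t ^ (u - 1) * (1 - t) ^ (v - 1) =
      Real.Gamma u * Real.Gamma v / Real.Gamma (u + v) := by
  have h := Complex.Gamma_mul_Gamma_eq_betaIntegral (s := u) (t := v) (by simpa) (by simpa)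
  rw [Complex.betaIntegral] at h
  have hcong : (∫ x : ℝ in (0:ℝ)..1, (x : ℂ) ^ ((u:ℂ) - 1) * (1 - (x:ℂ)) ^ ((v:ℂ) - 1)) =
      ((∫ t in (0:ℝ)..1, t ^ (u - 1) * (1 - t) ^ (v - 1) : ℝ) : ℂ) := by
    rw [← intervalIntegral.integral_ofReal]
    refine intervalIntegral.integral_congr fun x hx => ?_
    rw [uIcc_of_le zero_le_one] at hx
    exact betaKey u v hx.1 hx.2
  rw [hcong, ← Complex.ofReal_add, Complex.Gamma_ofReal, Complex.Gamma_ofReal,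
    Complex.Gamma_ofReal, ← Complex.ofReal_mul] at h
  have h' : Real.Gamma u * Real.Gamma v =
      Real.Gamma (u + v) * ∫ t in (0:ℝ)..1, t ^ (u - 1) * (1 - t) ^ (v - 1) := by
    exact_mod_cast h
  have hne : Real.Gamma (u + v) ≠ 0 := (Real.Gamma_pos_of_pos (by linarith)).ne'
  field_simp [hne]
  linarith [h']


lemma ptKey (α : ℝ) {φ : ℝ} (hφ : φ ∈ Ioo (0:ℝ) π) :
    |Real.sin (φ/2) * Real.cos (φ/2)| *
      ((Real.sin (φ/2) ^ 2) ^ ((1:ℝ)/2 - α - 1) * (1 - Real.sin (φ/2) ^ 2) ^ ((1:ℝ)/2 - 1))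
    = Real.sin (φ/2) ^ (-(2*α)) := by
  have hpi := Real.pi_pos
  have hs : 0 < Real.sin (φ/2) :=
    Real.sin_pos_of_pos_of_lt_pi (by linarith [hφ.1]) (by linarith [hφ.2])
  have hc : 0 < Real.cos (φ/2) :=
    Real.cos_pos_of_mem_Ioo ⟨by linarith [hφ.1], by linarith [hφ.2]⟩
  rw [abs_of_pos (mul_pos hs hc),
    show 1 - Real.sin (φ/2)^2 = Real.cos (φ/2)^2 from (Real.cos_sq' _).symm,
    ← Real.rpow_natCast (Real.sin (φ/2)) 2, ← Real.rpow_natCast (Real.cos (φ/2)) 2,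
    ← Real.rpow_mul hs.le, ← Real.rpow_mul hc.le]
  push_cast
  have e1 : Real.sin (φ/2) * Real.sin (φ/2) ^ (2*((1:ℝ)/2 - α - 1))
      = Real.sin (φ/2) ^ (-(2*α)) := by
    nth_rewrite 1 [← Real.rpow_one (Real.sin (φ/2))]
    rw [← Real.rpow_add hs]
    ring_nf
  have e2 : Real.cos (φ/2) * Real.cos (φ/2) ^ (2*((1:ℝ)/2 - 1)) = 1 := by
    nth_rewrite 1 [← Real.rpow_one (Real.cos (φ/2))]
    rw [← Real.rpow_add hc]
    norm_num
  rw [mul_mul_mul_comm, e1, e2, mul_one]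

lemma mainHalf (α : ℝ) (h0 : 0 < α) (h1 : α < 1/2) :
    IntegrableOn (fun φ : ℝ => Real.sin (φ/2) ^ (-(2*α))) (Ioo 0 π) ∧
    ∫ φ in Ioo (0:ℝ) π, Real.sin (φ/2) ^ (-(2*α)) =
      ∫ t in Ioo (0:ℝ) 1, t ^ ((1:ℝ)/2 - α - 1) * (1 - t) ^ ((1:ℝ)/2 - 1) := by
  have hpi := Real.pi_pos
  set f : ℝ → ℝ := fun φ => Real.sin (φ/2) ^ 2 with hf
  set g : ℝ → ℝ := fun t => t ^ ((1:ℝ)/2 - α - 1) * (1 - t) ^ ((1:ℝ)/2 - 1) with hg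
  have hf' : ∀ x ∈ Ioo (0:ℝ) π,
      HasDerivWithinAt f (Real.sin (x/2) * Real.cos (x/2)) (Ioo 0 π) x := by
    intro x _
    have hd : HasDerivAt (fun y : ℝ => Real.sin (y/2)) (Real.cos (x/2) * (1/2)) x := by
      simpa [Function.comp_def] using (Real.hasDerivAt_sin (x/2)).comp x ((hasDerivAt_id x).div_const 2)
    have := hd.pow 2
    apply HasDerivAt.hasDerivWithinAt
    convert this using 1
    · rfl
    · rfl
    · push_cast
      ring
  have hsin : ∀ x ∈ Ioo (0:ℝ) π, 0 < Real.sin (x/2) := fun x hx =>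
    Real.sin_pos_of_pos_of_lt_pi (by linarith [hx.1]) (by linarith [hx.2])
  have hmem : ∀ x ∈ Ioo (0:ℝ) π, x/2 ∈ Icc (-(π/2)) (π/2) := fun x hx =>
    ⟨by linarith [hx.1], by linarith [hx.2]⟩
  have hinj : InjOn f (Ioo 0 π) := by
    intro a ha b hb hab
    have h2 : (Real.sin (a/2) - Real.sin (b/2)) * (Real.sin (a/2) + Real.sin (b/2)) = 0 := by
      simp only [hf] at hab
      linear_combination hab
    have h3 : Real.sin (a/2) = Real.sin (b/2) := by
      rcases mul_eq_zero.1 h2 with h | h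
      · linarith
      · linarith [hsin a ha, hsin b hb]
    have := Real.injOn_sin (hmem a ha) (hmem b hb) h3
    linarith
  have himg : f '' Ioo 0 π = Ioo 0 1 := by
    apply Subset.antisymm
    · rintro _ ⟨x, hx, rfl⟩
      refine ⟨pow_pos (hsin x hx) 2, ?_⟩
      have hlt : Real.sin (x/2) < 1 := by
        have := Real.strictMonoOn_sin (hmem x hx)
          ⟨by linarith, le_refl _⟩ (by linarith [hx.2])
        simpa using this
      calc Real.sin (x/2) ^ 2 < 1 ^ 2 := by
            apply pow_lt_pow_left₀ hlt (hsin x hx).le (by norm_num)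
        _ = 1 := one_pow 2
    · have hiv := intermediate_value_Ioo (le_of_lt hpi)
        (Continuous.continuousOn (by fun_prop) : ContinuousOn f (Icc 0 π))
      have h0' : f 0 = 0 := by simp [hf]
      have h1' : f π = 1 := by
        simp [hf, Real.sin_pi_div_two]
      rwa [h0', h1'] at hiv
  have hiff := integrableOn_image_iff_integrableOn_abs_deriv_smul
    measurableSet_Ioo hf' hinj g
  rw [himg] at hiff
  have hbeta : IntegrableOn g (Ioo 0 1) := betaIntegrable (by linarith) (by norm_num)
  have hint := hiff.1 hbeta
  have heqOn : EqOn (fun x => |Real.sin (x/2) * Real.cos (x/2)| • g (f x))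
      (fun φ : ℝ => Real.sin (φ/2) ^ (-(2*α))) (Ioo 0 π) := by
    intro x hx
    simpa [smul_eq_mul, hf, hg] using ptKey α hx
  constructor
  · exact hint.congr_fun heqOn measurableSet_Ioo
  · have heq := integral_image_eq_integral_abs_deriv_smul measurableSet_Ioo hf' hinj g
    rw [himg] at heq
    rw [heq]
    exact (setIntegral_congr_fun measurableSet_Ioo heqOn).symm


lemma reflHalf (α : ℝ) (h0 : 0 < α) (h1 : α < 1/2) :
    IntegrableOn (fun φ : ℝ => Real.sin (φ/2) ^ (-(2*α))) (Ioo π (2*π)) ∧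
    ∫ φ in Ioo π (2*π), Real.sin (φ/2) ^ (-(2*α)) =
      ∫ φ in Ioo (0:ℝ) π, Real.sin (φ/2) ^ (-(2*α)) := by
  set g : ℝ → ℝ := fun φ => Real.sin (φ/2) ^ (-(2*α)) with hgdef
  have hf' : ∀ x ∈ Ioo (0:ℝ) π,
      HasDerivWithinAt (fun y : ℝ => 2*π - y) ((fun _ : ℝ => (-1:ℝ)) x) (Ioo 0 π) x :=
    fun x _ => ((hasDerivAt_id x).const_sub (2*π)).hasDerivWithinAt
  have hinj : InjOn (fun y : ℝ => 2*π - y) (Ioo 0 π) := fun a _ b _ h => by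
    dsimp at h; linarith
  have himg : (fun y : ℝ => 2*π - y) '' Ioo 0 π = Ioo π (2*π) := by
    rw [Set.image_const_sub_Ioo]
    congr 1 <;> ring
  have hEq : EqOn (fun x => |(fun _ : ℝ => (-1:ℝ)) x| • g (2*π - x)) g (Ioo 0 π) := by
    intro x _
    have hhalf : (2*π - x)/2 = π - x/2 := by ring
    simp [hgdef, hhalf, Real.sin_pi_sub]
  have hiff := integrableOn_image_iff_integrableOn_abs_deriv_smul
    (f := fun y : ℝ => 2*π - y) measurableSet_Ioo hf' hinj g
  rw [himg] at hiff
  have heq := integral_image_eq_integral_abs_deriv_smul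
    (f := fun y : ℝ => 2*π - y) measurableSet_Ioo hf' hinj g
  rw [himg] at heq
  refine ⟨hiff.2 (((mainHalf α h0 h1).1).congr_fun hEq.symm measurableSet_Ioo), ?_⟩
  rw [heq]
  exact setIntegral_congr_fun measurableSet_Ioo hEq

theorem stmt0 (α : ℝ) (h0 : 0 < α) (h1 : α < 1 / 2) :
    (1 / (2 * Real.pi)) *
        ∫ φ in (0:ℝ)..(2 * Real.pi), (2 * Real.sin (φ / 2)) ^ (-(2 * α)) =
      Real.Gamma (1 - 2 * α) / Real.Gamma (1 - α) ^ 2 := by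
  have hpi := Real.pi_pos
  have key : ∀ φ ∈ uIcc (0:ℝ) (2*π),
      (2*Real.sin (φ/2)) ^ (-(2*α)) = 2 ^ (-(2*α)) * Real.sin (φ/2) ^ (-(2*α)) := by
    intro φ hφ
    rw [uIcc_of_le (by linarith)] at hφ
    have hs : 0 ≤ Real.sin (φ/2) :=
      Real.sin_nonneg_of_nonneg_of_le_pi (by linarith [hφ.1]) (by linarith [hφ.2])
    rw [Real.mul_rpow (by norm_num) hs]
  rw [intervalIntegral.integral_congr key, intervalIntegral.integral_const_mul]
  have i1 := mainHalf α h0 h1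
  have i2 := reflHalf α h0 h1
  have hIcc1 : IntegrableOn (fun φ : ℝ => Real.sin (φ/2) ^ (-(2*α))) (Ioc 0 π) :=
    (integrableOn_Ioc_iff_integrableOn_Ioo enorm_ne_top).2 i1.1
  have hIcc2 : IntegrableOn (fun φ : ℝ => Real.sin (φ/2) ^ (-(2*α))) (Ioc π (2*π)) :=
    (integrableOn_Ioc_iff_integrableOn_Ioo enorm_ne_top).2 i2.1
  have hsplit : ∫ φ in (0:ℝ)..(2*π), Real.sin (φ/2) ^ (-(2*α)) =
      2 * ∫ t in Ioo (0:ℝ) 1, t ^ ((1:ℝ)/2 - α - 1) * (1 - t) ^ ((1:ℝ)/2 - 1) := by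
    rw [intervalIntegral.integral_of_le (by linarith),
      show Ioc (0:ℝ) (2*π) = Ioc 0 π ∪ Ioc π (2*π) from
        (Ioc_union_Ioc_eq_Ioc (by linarith) (by linarith)).symm,
      setIntegral_union (Ioc_disjoint_Ioc_of_le le_rfl) measurableSet_Ioc hIcc1 hIcc2,
      integral_Ioc_eq_integral_Ioo, integral_Ioc_eq_integral_Ioo, i2.2, i1.2]
    ring
  rw [hsplit]
  have hbeta : (∫ t in Ioo (0:ℝ) 1, t ^ ((1:ℝ)/2 - α - 1) * (1 - t) ^ ((1:ℝ)/2 - 1)) =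
      Real.Gamma (1/2 - α) * Real.Gamma (1/2) / Real.Gamma (1 - α) := by
    have := betaEval (u := 1/2 - α) (v := 1/2) (by linarith) (by norm_num)
    rw [intervalIntegral.integral_of_le zero_le_one, integral_Ioc_eq_integral_Ioo,
      show (1:ℝ)/2 - α + 1/2 = 1 - α by ring] at this
    exact this
  rw [hbeta, Real.Gamma_one_half_eq]
  have hdup := Real.Gamma_mul_Gamma_add_half (1/2 - α)
  rw [show (1:ℝ)/2 - α + 1/2 = 1 - α by ring, show 2*((1:ℝ)/2 - α) = 1 - 2*α by ring,
    show 1 - ((1:ℝ) - 2*α) = 2*α by ring] at hdup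
  have hB : 0 < Real.Gamma (1-α) := Real.Gamma_pos_of_pos (by linarith)
  have hsq : Real.sqrt π * Real.sqrt π = π := Real.mul_self_sqrt hpi.le
  have h2 : (2:ℝ)^(-(2*α)) * 2^(2*α) = 1 := by
    rw [← Real.rpow_add two_pos]; norm_num
  have hsqpos : 0 < Real.sqrt π := Real.sqrt_pos.2 hpi
  set A := Real.Gamma (1/2 - α) with hA
  set B := Real.Gamma (1 - α) with hBdef
  set C := Real.Gamma (1 - 2*α) with hC
  set t := (2:ℝ) ^ (-(2*α)) with ht
  set t' := (2:ℝ) ^ (2*α) with ht'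
  rw [eq_div_iff (pow_ne_zero 2 hB.ne')]
  field_simp
  linear_combination (t*Real.sqrt π)*hdup + (C*Real.sqrt π*Real.sqrt π)*h2 + C*hsq
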